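/- For every t > 0 and every δ ∈ (0,1), if d ≥ (M⁴/(2t²))·log(2n²/δ), then P( there exist i, j ∈ {1,…,n} with |(1/d)(RRᵀ)_{ij} − I_{ij}| ≥ t ) ≤ δ. -/

import Mathlib

open scoped BigOperators Matrix
open MeasureTheory ProbabilityTheory

open scoped ENNReal

lemma gcsb_exp_le_chord {y c : ℝ} (hc : 0 < c) (hy : |y| ≤ c) (lam : ℝ) :
    Real.exp (lam * y) ≤ Real.cosh (lam * c) + (Real.sinh (lam * c) / c) * y := by
  obtain ⟨hy1, hy2⟩ := abs_le.mp hy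
  have ha : 0 ≤ (c + y) / (2 * c) := by
    apply div_nonneg (by linarith) (by linarith)
  have hb : 0 ≤ (c - y) / (2 * c) := by
    apply div_nonneg (by linarith) (by linarith)
  have hab : (c + y) / (2 * c) + (c - y) / (2 * c) = 1 := by
    field_simp; ring
  have key := convexOn_exp.2 (Set.mem_univ (lam * c)) (Set.mem_univ (-(lam * c))) ha hb hab
  simp only [smul_eq_mul] at key
  have h1 : (c + y) / (2 * c) * (lam * c) + (c - y) / (2 * c) * -(lam * c) = lam * y := by
    field_simp; ring
  rw [h1] at key
  refine key.trans (le_of_eq ?_)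
  rw [Real.cosh_eq, Real.sinh_eq]
  field_simp
  ring

lemma gcsb_mgf_le {Ω : Type*} [MeasureSpace Ω] [IsProbabilityMeasure (volume : Measure Ω)]
    {Y : Ω → ℝ} (hm : Measurable Y) {c : ℝ} (hc : 0 < c)
    (hb : ∀ᵐ ω, |Y ω| ≤ c) (h0 : ∫ ω, Y ω = 0) (lam : ℝ) :
    mgf Y volume lam ≤ Real.exp (lam ^ 2 * c ^ 2 / 2) := by
  have hYint : Integrable Y := (integrable_const c).mono' hm.aestronglyMeasurable
    (hb.mono fun ω h => by simpa [Real.norm_eq_abs] using h)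
  have hexpint : Integrable (fun ω => Real.exp (lam * Y ω)) :=
    (integrable_const (Real.exp (|lam| * c))).mono' ((hm.const_mul lam).exp.aestronglyMeasurable)
      (hb.mono fun ω h => by
        rw [Real.norm_eq_abs, Real.abs_exp]
        refine Real.exp_le_exp.2 ((le_abs_self _).trans ?_)
        rw [abs_mul]
        exact mul_le_mul_of_nonneg_left h (abs_nonneg _))
  have hRHSint : Integrable (fun ω => Real.cosh (lam * c) + (Real.sinh (lam * c) / c) * Y ω) :=
    (integrable_const _).add (hYint.const_mul _)
  have hmono : ∫ ω, Real.exp (lam * Y ω) ≤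
      ∫ ω, (Real.cosh (lam * c) + (Real.sinh (lam * c) / c) * Y ω) := by
    refine integral_mono_ae hexpint hRHSint (hb.mono fun ω h => gcsb_exp_le_chord hc h lam)
  calc mgf Y volume lam = ∫ ω, Real.exp (lam * Y ω) := rfl
    _ ≤ ∫ ω, (Real.cosh (lam * c) + (Real.sinh (lam * c) / c) * Y ω) := hmono
    _ = Real.cosh (lam * c) := by
        rw [integral_add (integrable_const _) (hYint.const_mul _), integral_const,
          integral_const_mul, h0, probReal_univ]
        simp
    _ ≤ Real.exp ((lam * c) ^ 2 / 2) := Real.cosh_le_exp_half_sq _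
    _ = Real.exp (lam ^ 2 * c ^ 2 / 2) := by rw [mul_pow]

lemma gcsb_pair {Ω : Type*} [MeasureSpace Ω] [IsProbabilityMeasure (volume : Measure Ω)]
    {n d : ℕ} (hd : 1 ≤ d) {M : ℝ} (hM : 0 < M)
    (R : Ω → Matrix (Fin n) (Fin d) ℝ)
    (hmeas : ∀ i l, Measurable fun ω => R ω i l)
    (hindep : iIndepFun
      (fun (p : Fin n × Fin d) ω => R ω p.1 p.2) volume)
    (hmean : ∀ i l, ∫ ω, R ω i l = 0)
    (hvar : ∀ i l, ∫ ω, (R ω i l) ^ 2 = 1)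
    (hbound : ∀ i l, ∀ᵐ ω, |R ω i l| ≤ M / 2)
    {t : ℝ} (ht : 0 < t) (i j : Fin n) :
    volume {ω | t ≤ |(1 / (d : ℝ)) * (∑ l, R ω i l * R ω j l) - (if i = j then 1 else 0)|}
      ≤ ENNReal.ofReal (2 * Real.exp (-(2 * d * t ^ 2 / M ^ 4))) := by
  classical
  set c : ℝ := M ^ 2 / 4 with hc_def
  have hc : 0 < c := by positivity
  set μc : ℝ := if i = j then 1 else 0 with hμc_def
  set Y : Fin d → Ω → ℝ := fun l ω => R ω i l * R ω j l - μc with hY_def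
  -- basic integrability of entries and squares
  have hIntR : ∀ (a : Fin n) (l : Fin d), Integrable (fun ω => R ω a l) volume := fun a l =>
    (integrable_const (M / 2)).mono' (hmeas a l).aestronglyMeasurable
      ((hbound a l).mono fun ω h => by simpa [Real.norm_eq_abs] using h)
  -- 1 ≤ c
  have hc1 : (1 : ℝ) ≤ c := by
    set l0 : Fin d := ⟨0, hd⟩
    have hint : Integrable (fun ω => (R ω i l0) ^ 2) volume :=
      (integrable_const c).mono' ((hmeas i l0).pow_const 2).aestronglyMeasurable
        ((hbound i l0).mono fun ω h => by
          rw [Real.norm_eq_abs, abs_of_nonneg (sq_nonneg _), ← sq_abs]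
          calc |R ω i l0| ^ 2 ≤ (M / 2) ^ 2 := by
                exact pow_le_pow_left₀ (abs_nonneg _) h 2
            _ = c := by rw [hc_def]; ring)
    have := integral_mono_ae hint (integrable_const c)
      ((hbound i l0).mono fun ω h => by
        calc (R ω i l0) ^ 2 = |R ω i l0| ^ 2 := (sq_abs _).symm
          _ ≤ (M / 2) ^ 2 := pow_le_pow_left₀ (abs_nonneg _) h 2
          _ = c := by rw [hc_def]; ring)
    rw [hvar i l0, integral_const, probReal_univ] at this
    simpa using this
  have hYm : ∀ l, Measurable (Y l) := fun l => ((hmeas i l).mul (hmeas j l)).sub measurable_const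
  have hYb : ∀ l, ∀ᵐ ω, |Y l ω| ≤ c := by
    intro l
    filter_upwards [hbound i l, hbound j l] with ω h1 h2
    have hp : |R ω i l * R ω j l| ≤ c := by
      rw [abs_mul]
      calc |R ω i l| * |R ω j l| ≤ (M / 2) * (M / 2) :=
            mul_le_mul h1 h2 (abs_nonneg _) (by linarith)
        _ = c := by rw [hc_def]; ring
    have hp2 := abs_le.mp hp
    rw [hY_def]
    by_cases hij : i = j
    · subst hij
      simp only [hμc_def, eq_self_iff_true, if_true]
      rw [abs_le]
      constructor <;> nlinarith [hp2.1, hp2.2, hc1, mul_self_nonneg (R ω i l)]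
    · simp only [hμc_def, if_neg hij, sub_zero]
      exact hp
  have hY0 : ∀ l, ∫ ω, Y l ω = 0 := by
    intro l
    have hIntP : Integrable (fun ω => R ω i l * R ω j l) volume :=
      (integrable_const c).mono' ((hmeas i l).mul (hmeas j l)).aestronglyMeasurable
        (by filter_upwards [hbound i l, hbound j l] with ω h1 h2
            rw [Real.norm_eq_abs, abs_mul]
            calc |R ω i l| * |R ω j l| ≤ (M / 2) * (M / 2) :=
                  mul_le_mul h1 h2 (abs_nonneg _) (by linarith)
              _ = c := by rw [hc_def]; ring)
    rw [hY_def]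
    simp only
    rw [integral_sub hIntP (integrable_const _), integral_const, probReal_univ]
    by_cases hij : i = j
    · subst hij
      have : ∫ ω, R ω i l * R ω i l = 1 := by
        have := hvar i l; simpa [pow_two] using this
      simp [hμc_def, this]
    · have hne : (⟨i, l⟩ : Fin n × Fin d) ≠ ⟨j, l⟩ := by
        simp [Prod.ext_iff, hij]
      have hIF : IndepFun (fun ω => R ω i l) (fun ω => R ω j l) volume :=
        hindep.indepFun hne
      have hmul : (∫ ω, R ω i l * R ω j l) = 0 := by
        have h := hIF.integral_mul_eq_mul_integral (hIntR i l).1 (hIntR j l).1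
        simpa [Pi.mul_apply, hmean i l] using h
      rw [hmul]
      simp [hμc_def, hij]
  -- block independence
  have hblock : ∀ (l : Fin d) (S : Finset (Fin d)), l ∉ S →
      IndepFun (Y l) (fun ω => ∑ l' ∈ S, Y l' ω) volume := by
    intro l S hlS
    set A : Finset (Fin n × Fin d) := Finset.univ ×ˢ {l} with hA
    set B : Finset (Fin n × Fin d) := Finset.univ ×ˢ S with hB
    have hAB : Disjoint A B := by
      rw [Finset.disjoint_left]
      intro p hpA hpB
      have h1 : p.2 = l := Finset.mem_singleton.mp (Finset.mem_product.mp hpA).2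
      have h2 : p.2 ∈ S := (Finset.mem_product.mp hpB).2
      exact hlS (h1 ▸ h2)
    have hbase := hindep.indepFun_finset A B hAB (fun p => hmeas p.1 p.2)
    have hiA : ((i, l) : Fin n × Fin d) ∈ A := by simp [hA]
    have hjA : ((j, l) : Fin n × Fin d) ∈ A := by simp [hA]
    set φ : (A → ℝ) → ℝ := fun g => g ⟨(i, l), hiA⟩ * g ⟨(j, l), hjA⟩ - μc with hφ
    set ψ : (B → ℝ) → ℝ := fun g => ∑ l' ∈ S.attach,
      (g ⟨(i, l'.1), by simp [hB, l'.2]⟩ * g ⟨(j, l'.1), by simp [hB, l'.2]⟩ - μc) with hψ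
    have hφm : Measurable φ := by
      rw [hφ]
      fun_prop
    have hψm : Measurable ψ := by
      rw [hψ]
      refine Finset.measurable_sum _ (fun l' _ => ?_)
      fun_prop
    have hcomp := hbase.comp hφm hψm
    have he1 : (φ ∘ fun ω (p : A) => R ω (p : Fin n × Fin d).1 (p : Fin n × Fin d).2) = Y l := rfl
    have he2 : (ψ ∘ fun ω (p : B) => R ω (p : Fin n × Fin d).1 (p : Fin n × Fin d).2)
        = fun ω => ∑ l' ∈ S, Y l' ω := by
      funext ω
      rw [hψ]
      simp only [Function.comp_apply]
      exact Finset.sum_attach S fun x => R ω i x * R ω j x - μc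
    rw [he1, he2] at hcomp
    exact hcomp
  -- mgf bound for partial sums
  have hmgf : ∀ (lam : ℝ) (S : Finset (Fin d)),
      mgf (fun ω => ∑ l ∈ S, Y l ω) volume lam ≤ Real.exp (lam ^ 2 * c ^ 2 / 2) ^ S.card := by
    intro lam S
    induction S using Finset.induction_on with
    | empty => simp [mgf]
    | @insert l S hlS ih =>
      have hsplit : (fun ω => ∑ l' ∈ insert l S, Y l' ω)
          = Y l + fun ω => ∑ l' ∈ S, Y l' ω := by
        funext ω
        show ∑ l' ∈ insert l S, Y l' ω = Y l ω + ∑ l' ∈ S, Y l' ω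
        exact Finset.sum_insert hlS
      have hX1 : AEStronglyMeasurable (fun ω => Real.exp (lam * Y l ω)) volume :=
        (((hYm l).const_mul lam).exp).aestronglyMeasurable
      have hX2 : AEStronglyMeasurable (fun ω => Real.exp (lam * ∑ l' ∈ S, Y l' ω)) volume :=
        (((Finset.measurable_sum S fun l' _ => hYm l').const_mul lam).exp).aestronglyMeasurable
      rw [hsplit, (hblock l S hlS).mgf_add hX1 hX2, Finset.card_insert_of_notMem hlS,
        pow_succ']
      exact mul_le_mul (gcsb_mgf_le (hYm l) hc (hYb l) (hY0 l) lam) ih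
        mgf_nonneg (Real.exp_pos _).le
  -- the centered sum
  set Sum : Ω → ℝ := fun ω => ∑ l, Y l ω with hSum_def
  have hd0 : (0 : ℝ) < d := by exact_mod_cast hd
  have hSm : Measurable Sum := Finset.measurable_sum _ fun l _ => hYm l
  have hSb : ∀ᵐ ω, |Sum ω| ≤ d * c := by
    have := MeasureTheory.ae_all_iff.mpr hYb
    filter_upwards [this] with ω h
    calc |Sum ω| ≤ ∑ l, |Y l ω| := Finset.abs_sum_le_sum_abs _ _
      _ ≤ ∑ _l : Fin d, c := Finset.sum_le_sum fun l _ => h l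
      _ = d * c := by simp [mul_comm]
  have hexpint : ∀ lam : ℝ, Integrable (fun ω => Real.exp (lam * Sum ω)) volume := by
    intro lam
    refine (integrable_const (Real.exp (|lam| * (d * c)))).mono'
      ((hSm.const_mul lam).exp).aestronglyMeasurable ?_
    filter_upwards [hSb] with ω h
    rw [Real.norm_eq_abs, Real.abs_exp]
    refine Real.exp_le_exp.2 ((le_abs_self _).trans ?_)
    rw [abs_mul]
    exact mul_le_mul_of_nonneg_left h (abs_nonneg _)
  set lam0 : ℝ := t / c ^ 2 with hlam0_def
  have hlam0 : 0 ≤ lam0 := by positivity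
  set E : ℝ := Real.exp (-(d * t ^ 2 / (2 * c ^ 2))) with hE_def
  have hmgfSum : ∀ lam : ℝ, mgf Sum volume lam ≤ Real.exp ((d : ℝ) * (lam ^ 2 * c ^ 2 / 2)) := by
    intro lam
    have := hmgf lam Finset.univ
    rw [Finset.card_univ, Fintype.card_fin, ← Real.exp_nat_mul] at this
    exact this
  have hcombine : ∀ lam : ℝ, lam * ((d : ℝ) * t) - (d : ℝ) * (lam ^ 2 * c ^ 2 / 2)
      = d * t ^ 2 / (2 * c ^ 2) → True := fun _ _ => trivial
  have hup : (volume {ω | (d : ℝ) * t ≤ Sum ω}).toReal ≤ E := by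
    have h1 := measure_ge_le_exp_mul_mgf (μ := volume) (X := Sum) ((d : ℝ) * t) hlam0
      (hexpint lam0)
    refine h1.trans ?_
    calc Real.exp (-lam0 * ((d : ℝ) * t)) * mgf Sum volume lam0
        ≤ Real.exp (-lam0 * ((d : ℝ) * t)) * Real.exp ((d : ℝ) * (lam0 ^ 2 * c ^ 2 / 2)) := by
          exact mul_le_mul_of_nonneg_left (hmgfSum lam0) (Real.exp_pos _).le
      _ = E := by
          rw [← Real.exp_add, hE_def]
          congr 1
          rw [hlam0_def]
          field_simp
          ring
  have hlo : (volume {ω | Sum ω ≤ -((d : ℝ) * t)}).toReal ≤ E := by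
    have h1 := measure_le_le_exp_mul_mgf (μ := volume) (X := Sum) (-((d : ℝ) * t))
      (neg_nonpos.mpr hlam0) (hexpint (-lam0))
    refine h1.trans ?_
    calc Real.exp (-(-lam0) * -((d : ℝ) * t)) * mgf Sum volume (-lam0)
        ≤ Real.exp (-(-lam0) * -((d : ℝ) * t)) * Real.exp ((d : ℝ) * ((-lam0) ^ 2 * c ^ 2 / 2)) := by
          exact mul_le_mul_of_nonneg_left (hmgfSum (-lam0)) (Real.exp_pos _).le
      _ = E := by
          rw [← Real.exp_add, hE_def]
          congr 1
          rw [hlam0_def]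
          field_simp
          ring
  -- event rewriting
  have hset : {ω | t ≤ |(1 / (d : ℝ)) * (∑ l, R ω i l * R ω j l) - (if i = j then 1 else 0)|}
      = {ω | (d : ℝ) * t ≤ |Sum ω|} := by
    ext ω
    simp only [Set.mem_setOf_eq]
    have hS : Sum ω = (∑ l, R ω i l * R ω j l) - d * μc := by
      rw [hSum_def, hY_def]
      simp only [Finset.sum_sub_distrib, Finset.sum_const, Finset.card_univ,
        Fintype.card_fin, nsmul_eq_mul]
    have heq : (1 / (d : ℝ)) * (∑ l, R ω i l * R ω j l) - (if i = j then 1 else 0)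
        = Sum ω / d := by
      rw [hS, hμc_def]
      field_simp
    rw [heq, abs_div, abs_of_pos hd0, le_div_iff₀ hd0]
    constructor <;> intro h <;> linarith
  rw [hset]
  have hsub : {ω | (d : ℝ) * t ≤ |Sum ω|}
      ⊆ {ω | (d : ℝ) * t ≤ Sum ω} ∪ {ω | Sum ω ≤ -((d : ℝ) * t)} := by
    intro ω hω
    have h' : (d : ℝ) * t ≤ |Sum ω| := hω
    rcases le_abs.mp h' with h | h
    · exact Or.inl h
    · exact Or.inr (show Sum ω ≤ -((d : ℝ) * t) by linarith)
  calc volume {ω | (d : ℝ) * t ≤ |Sum ω|}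
      ≤ volume ({ω | (d : ℝ) * t ≤ Sum ω} ∪ {ω | Sum ω ≤ -((d : ℝ) * t)}) := measure_mono hsub
    _ ≤ volume {ω | (d : ℝ) * t ≤ Sum ω} + volume {ω | Sum ω ≤ -((d : ℝ) * t)} :=
        measure_union_le _ _
    _ ≤ ENNReal.ofReal E + ENNReal.ofReal E := by
        gcongr
        · exact (ENNReal.le_ofReal_iff_toReal_le (measure_ne_top _ _)
            (Real.exp_pos _).le).mpr hup
        · exact (ENNReal.le_ofReal_iff_toReal_le (measure_ne_top _ _)
            (Real.exp_pos _).le).mpr hlo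
    _ = ENNReal.ofReal (2 * E) := by
        rw [← ENNReal.ofReal_add (Real.exp_pos _).le (Real.exp_pos _).le]
        congr 1
        ring
    _ ≤ ENNReal.ofReal (2 * Real.exp (-(2 * d * t ^ 2 / M ^ 4))) := by
        refine ENNReal.ofReal_le_ofReal ?_
        have hnn : 0 ≤ (d : ℝ) * t ^ 2 / M ^ 4 := by positivity
        have h8 : (d : ℝ) * t ^ 2 / (2 * c ^ 2) = 8 * ((d : ℝ) * t ^ 2 / M ^ 4) := by
          rw [hc_def]
          field_simp
          ring
        have h2 : 2 * (d : ℝ) * t ^ 2 / M ^ 4 = 2 * ((d : ℝ) * t ^ 2 / M ^ 4) := by ring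
        have := Real.exp_le_exp.mpr (show -((d : ℝ) * t ^ 2 / (2 * c ^ 2))
            ≤ -(2 * d * t ^ 2 / M ^ 4) by rw [h8, h2]; linarith)
        rw [hE_def]
        linarith

/-- If `d ≥ (M⁴/(2t²)) log(2n²/δ)` then
`P(∃ i j, |(1/d)(R Rᵀ)_{ij} − I_{ij}| ≥ t) ≤ δ`. -/
theorem gram_concentration_sample_bound
    {Ω : Type*} [MeasureSpace Ω] [IsProbabilityMeasure (volume : Measure Ω)]
    (n d : ℕ) (hn : 1 ≤ n) (hd : 1 ≤ d) (M : ℝ) (hM : 0 < M)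
    (R : Ω → Matrix (Fin n) (Fin d) ℝ)
    (hmeas : ∀ i l, Measurable fun ω => R ω i l)
    (hindep : iIndepFun
      (fun (p : Fin n × Fin d) ω => R ω p.1 p.2) volume)
    (hmean : ∀ i l, ∫ ω, R ω i l = 0)
    (hvar : ∀ i l, ∫ ω, (R ω i l) ^ 2 = 1)
    (hbound : ∀ i l, ∀ᵐ ω, |R ω i l| ≤ M / 2)
    (t : ℝ) (ht : 0 < t) (δ : ℝ) (hδ₀ : 0 < δ) (hδ₁ : δ < 1)
    (hd' : (M ^ 4 / (2 * t ^ 2)) * Real.log (2 * n ^ 2 / δ) ≤ (d : ℝ)) :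
    volume {ω | ∃ i j : Fin n,
        t ≤ |(1 / (d : ℝ)) * (R ω * (R ω)ᵀ) i j - (1 : Matrix (Fin n) (Fin n) ℝ) i j|}
      ≤ ENNReal.ofReal δ := by

  classical
  have hn0 : (0 : ℝ) < n := by exact_mod_cast hn
  -- numeric bound
  have hx : (0 : ℝ) < 2 * n ^ 2 / δ := by positivity
  have hL : Real.log (2 * n ^ 2 / δ) ≤ 2 * (d : ℝ) * t ^ 2 / M ^ 4 := by
    have hpos : (0 : ℝ) < 2 * t ^ 2 / M ^ 4 := by positivity
    have h := mul_le_mul_of_nonneg_left hd' hpos.le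
    calc Real.log (2 * n ^ 2 / δ)
        = (2 * t ^ 2 / M ^ 4) * ((M ^ 4 / (2 * t ^ 2)) * Real.log (2 * n ^ 2 / δ)) := by
          field_simp
      _ ≤ (2 * t ^ 2 / M ^ 4) * d := h
      _ = 2 * (d : ℝ) * t ^ 2 / M ^ 4 := by ring
  have hnum : 2 * Real.exp (-(2 * d * t ^ 2 / M ^ 4)) ≤ δ / n ^ 2 := by
    have h1 : Real.exp (-(2 * d * t ^ 2 / M ^ 4)) ≤ Real.exp (-Real.log (2 * n ^ 2 / δ)) :=
      Real.exp_le_exp.mpr (by linarith)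
    have h2 : Real.exp (-Real.log (2 * n ^ 2 / δ)) = δ / (2 * n ^ 2) := by
      rw [Real.exp_neg, Real.exp_log hx]
      field_simp
    rw [h2] at h1
    have h4 : δ / (2 * (n : ℝ) ^ 2) * 2 = δ / (n : ℝ) ^ 2 := by
      field_simp
    linarith
  -- event rewriting
  have hset : {ω | ∃ i j : Fin n,
        t ≤ |(1 / (d : ℝ)) * (R ω * (R ω)ᵀ) i j - (1 : Matrix (Fin n) (Fin n) ℝ) i j|}
      = ⋃ i : Fin n, ⋃ j : Fin n,
          {ω | t ≤ |(1 / (d : ℝ)) * (∑ l, R ω i l * R ω j l) - (if i = j then 1 else 0)|} := by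
    ext ω
    simp [Matrix.mul_apply, Matrix.transpose_apply, Matrix.one_apply, Set.mem_iUnion]
  rw [hset]
  have hperpair : ∀ i j : Fin n,
      volume {ω | t ≤ |(1 / (d : ℝ)) * (∑ l, R ω i l * R ω j l) - (if i = j then 1 else 0)|}
        ≤ ENNReal.ofReal (δ / n ^ 2) := fun i j =>
    (gcsb_pair hd hM R hmeas hindep hmean hvar hbound ht i j).trans
      (ENNReal.ofReal_le_ofReal hnum)
  calc volume (⋃ i : Fin n, ⋃ j : Fin n,
          {ω | t ≤ |(1 / (d : ℝ)) * (∑ l, R ω i l * R ω j l) - (if i = j then 1 else 0)|})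
      ≤ ∑' i : Fin n, volume (⋃ j : Fin n,
          {ω | t ≤ |(1 / (d : ℝ)) * (∑ l, R ω i l * R ω j l) - (if i = j then 1 else 0)|}) :=
        measure_iUnion_le _
    _ ≤ ∑' i : Fin n, ∑' j : Fin n, volume
          {ω | t ≤ |(1 / (d : ℝ)) * (∑ l, R ω i l * R ω j l) - (if i = j then 1 else 0)|} :=
        ENNReal.tsum_le_tsum fun i => measure_iUnion_le _
    _ ≤ ∑' (_ : Fin n), ∑' (_ : Fin n), ENNReal.ofReal (δ / n ^ 2) :=
        ENNReal.tsum_le_tsum fun i => ENNReal.tsum_le_tsum fun j => hperpair i j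
    _ = (n : ℝ≥0∞) * ((n : ℝ≥0∞) * ENNReal.ofReal (δ / n ^ 2)) := by
        simp [tsum_fintype, Finset.sum_const, Finset.card_univ, mul_comm]
    _ ≤ ENNReal.ofReal δ := by
        rw [← ENNReal.ofReal_natCast n, ← ENNReal.ofReal_mul (by positivity),
          ← ENNReal.ofReal_mul (by positivity)]
        refine ENNReal.ofReal_le_ofReal (le_of_eq ?_)
        field_simp
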